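/- In a quasi-abelian category, universal epimorphisms are stable under pushout: if f : A ⟶ B is a universal epimorphism and g : A ⟶ X is an arbitrary morphism, then in the pushout square of f along g the induced morphism X ⟶ Y is again a universal epimorphism. -/

import Mathlib

open CategoryTheory CategoryTheory.Limits

universe v u

/-- An epimorphism `f` is a *universal epimorphism* if it is stable under pullback:
for every morphism `δ : Z ⟶ B`, the projection from the pullback of `f` and `δ`
to `Z` is again an epimorphism. -/
def IsUniversalEpi {C : Type u} [Category.{v} C] [HasPullbacks C]
    {A B : C} (f : A ⟶ B) : Prop :=
  Epi f ∧ ∀ ⦃Z : C⦄ (δ : Z ⟶ B), Epi (pullback.snd f δ)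

/-- In a quasi-abelian category (preabelian, with cokernels stable under pullback and
kernels stable under pushout), universal epimorphisms are stable under pushout. -/
theorem universalEpi_stable_under_pushout
    {C : Type u} [Category.{v} C] [Preadditive C]
    [HasKernels C] [HasCokernels C] [HasPullbacks C] [HasPushouts C]
    (hcoker : ∀ {A B Z : C} (f : A ⟶ B), Nonempty (NormalEpi f) →
      ∀ (δ : Z ⟶ B), Nonempty (NormalEpi (pullback.snd f δ)))
    (hker : ∀ {A B X : C} (f : A ⟶ B), Nonempty (NormalMono f) →
      ∀ (g : A ⟶ X), Nonempty (NormalMono (pushout.inr f g)))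
    {A B X : C} (f : A ⟶ B) (hf : IsUniversalEpi f) (g : A ⟶ X) :
    IsUniversalEpi (pushout.inr f g) := by
  obtain ⟨hfepi, hfpb⟩ := hf
  -- the category has a zero object (the kernel of an identity)
  have hzero : HasZeroObject C := by
    have hι : kernel.ι (𝟙 A) = 0 := by simpa using kernel.condition (𝟙 A)
    have hid : 𝟙 (kernel (𝟙 A)) = 0 := by
      rw [← cancel_mono (kernel.ι (𝟙 A))]
      simp [hι]
    exact ((IsZero.iff_id_eq_zero _).2 hid).hasZeroObject
  have hterm : HasTerminal C := inferInstance
  have hbp : HasBinaryProducts C := hasBinaryProducts_of_hasTerminal_and_pullbacks C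
  have hbb : HasBinaryBiproducts C := HasBinaryBiproducts.of_hasBinaryProducts
  -- the canonical map from the biproduct to the pushout is a cokernel
  let q : (B ⊞ X) ⟶ pushout f g := biprod.desc (pushout.inl f g) (pushout.inr f g)
  have hq : Nonempty (NormalEpi q) := by
    refine ⟨⟨A, biprod.lift f (-g), ?_, ?_⟩⟩
    · simp [q, pushout.condition]
    · refine CokernelCofork.IsColimit.ofπ _ _
        (fun {W'} π hπ => pushout.desc (biprod.inl ≫ π) (biprod.inr ≫ π) ?_)
        (fun {W'} π hπ => ?_) (fun {W'} π hπ m hm => ?_)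
      · rw [← sub_eq_zero, sub_eq_add_neg]
        simpa [biprod.lift_eq, Preadditive.add_comp] using hπ
      · apply biprod.hom_ext' <;> simp [q]
        · exact pushout.inl_desc _ _ _
        · exact pushout.inr_desc _ _ _
      · apply pushout.hom_ext <;>
          simp [q, ← hm, ← Category.assoc]
        · exact (pushout.inl_desc _ _ _).symm
        · exact (pushout.inr_desc _ _ _).symm
  refine ⟨?_, ?_⟩
  · -- the pushout of an epi is an epi
    constructor
    intro W u v huv
    apply pushout.hom_ext
    · rw [← cancel_epi f]
      simp only [← Category.assoc, pushout.condition]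
      simp only [Category.assoc, huv]
    · exact huv
  · intro Z δ
    -- pull back the cokernel q along δ : it is a normal epi, hence epi
    obtain ⟨ne⟩ := hcoker q hq δ
    have ht : Epi (pullback.snd q δ) := inferInstance
    -- pull back f along the first component of pullback.fst q δ
    set w : pullback q δ ⟶ B ⊞ X := pullback.fst q δ with hw
    have hr : Epi (pullback.snd f (w ≫ biprod.fst)) := hfpb _
    set a : pullback f (w ≫ biprod.fst) ⟶ A := pullback.fst f (w ≫ biprod.fst) with ha
    set r : pullback f (w ≫ biprod.fst) ⟶ pullback q δ :=
      pullback.snd f (w ≫ biprod.fst) with hrr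
    -- construct the comparison map into the pullback of pushout.inr along δ
    have key : (a ≫ g + r ≫ w ≫ biprod.snd) ≫ pushout.inr f g =
        (r ≫ pullback.snd q δ) ≫ δ := by
      have h1 : a ≫ f = r ≫ w ≫ biprod.fst := pullback.condition
      have h2 : w ≫ q = pullback.snd q δ ≫ δ := pullback.condition
      have h3 : w ≫ q = w ≫ biprod.fst ≫ pushout.inl f g +
          w ≫ biprod.snd ≫ pushout.inr f g := by
        simp [q, biprod.desc_eq, Preadditive.comp_add]
      calc (a ≫ g + r ≫ w ≫ biprod.snd) ≫ pushout.inr f g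
          = a ≫ g ≫ pushout.inr f g + r ≫ w ≫ biprod.snd ≫ pushout.inr f g := by
            simp [Preadditive.add_comp]
        _ = a ≫ f ≫ pushout.inl f g + r ≫ w ≫ biprod.snd ≫ pushout.inr f g := by
            rw [← pushout.condition]
        _ = r ≫ (w ≫ biprod.fst ≫ pushout.inl f g + w ≫ biprod.snd ≫ pushout.inr f g) := by
            rw [← Category.assoc, h1]
            simp [Preadditive.comp_add]
        _ = r ≫ w ≫ q := by rw [← h3]
        _ = (r ≫ pullback.snd q δ) ≫ δ := by rw [h2]; simp
    set u : pullback f (w ≫ biprod.fst) ⟶ pullback (pushout.inr f g) δ :=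
      pullback.lift (a ≫ g + r ≫ w ≫ biprod.snd) (r ≫ pullback.snd q δ) key with hu
    have husnd : u ≫ pullback.snd (pushout.inr f g) δ = r ≫ pullback.snd q δ :=
      pullback.lift_snd _ _ _
    have : Epi (u ≫ pullback.snd (pushout.inr f g) δ) := by
      rw [husnd]; exact epi_comp _ _
    exact epi_of_epi u _
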